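/- For finite relational structures A and B over the same signature, A and B are homomorphically equivalent (there exist homomorphisms A → B and B → A) if and only if A and B have isomorphic cores, where a core of a structure is a minimal-size retract. -/

import Mathlib

/-- A finite relational structure over the signature with relation symbols `ι`
and arities `ar`. -/
structure Str (ι : Type) (ar : ι → ℕ) where
  carrier : Type
  rel : ∀ i, (Fin (ar i) → carrier) → Prop

variable {ι : Type} {ar : ι → ℕ}

/-- `h` is a homomorphism from `A` to `B`. -/
def IsHom (A B : Str ι ar) (h : A.carrier → B.carrier) : Prop :=
  ∀ i t, A.rel i t → B.rel i (h ∘ t)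

/-- The induced substructure of `A` on a subset `S`. -/
def induced (A : Str ι ar) (S : Set A.carrier) : Str ι ar :=
  ⟨S, fun i t => A.rel i (fun j => (t j : A.carrier))⟩

/-- `S` is a retract of `A`: there is a homomorphism `A → A` with range in `S`
fixing `S` pointwise. -/
def IsRetract (A : Str ι ar) (S : Set A.carrier) : Prop :=
  ∃ r : A.carrier → A.carrier, IsHom A A r ∧ (∀ x, r x ∈ S) ∧ (∀ x ∈ S, r x = x)

/-- `S` is a core of `A`: a retract of minimal cardinality. -/
def IsCore (A : Str ι ar) (S : Set A.carrier) : Prop :=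
  IsRetract A S ∧ ∀ T : Set A.carrier, IsRetract A T → Nat.card S ≤ Nat.card T

/-- Isomorphism of structures. -/
def Isomorphic (A B : Str ι ar) : Prop :=
  ∃ g : A.carrier ≃ B.carrier, ∀ i t, A.rel i t ↔ B.rel i (g ∘ t)

/- ----------------- auxiliary lemmas ----------------- -/

lemma isHom_comp {A B C : Str ι ar} {f : A.carrier → B.carrier} {g : B.carrier → C.carrier}
    (hf : IsHom A B f) (hg : IsHom B C g) : IsHom A C (g ∘ f) :=
  fun i t h => hg i (f ∘ t) (hf i t h)

lemma isHom_iterate {A : Str ι ar} {f : A.carrier → A.carrier} (hf : IsHom A A f) (n : ℕ) :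
    IsHom A A f^[n] := by
  induction n with
  | zero => exact fun i t h => h
  | succ n ih => exact (Function.iterate_succ' f n) ▸ isHom_comp ih hf

/-- every self-map of a finite type has an idempotent iterate with positive exponent -/
lemma exists_iterate_idem {α : Type*} [Finite α] (f : α → α) :
    ∃ n, 0 < n ∧ f^[n] ∘ f^[n] = f^[n] := by
  obtain ⟨a, b, hlt, hab⟩ : ∃ a b, a < b ∧ f^[a] = f^[b] := by
    have hni : ¬ Function.Injective (fun n : ℕ => f^[n]) := by
      intro h
      exact (Set.infinite_range_of_injective h) (Set.toFinite _)
    rw [Function.not_injective_iff] at hni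
    obtain ⟨x, y, hxy, hne⟩ := hni
    rcases lt_or_gt_of_ne hne with h | h
    · exact ⟨x, y, h, hxy⟩
    · exact ⟨y, x, h, hxy.symm⟩
  have step : ∀ m, a ≤ m → f^[m + (b - a)] = f^[m] := by
    intro m hm
    have h1 : m + (b - a) = (m - a) + b := by omega
    have h2 : (m - a) + a = m := by omega
    rw [h1, Function.iterate_add, ← hab, ← Function.iterate_add, h2]
  have key : ∀ j m, a ≤ m → f^[m + j * (b - a)] = f^[m] := by
    intro j
    induction j with
    | zero => simp
    | succ j ih =>
      intro m hm
      have h3 : m + (j + 1) * (b - a) = (m + (b - a)) + j * (b - a) := by ring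
      rw [h3, ih (m + (b - a)) (by omega), step m hm]
  set n := (a + 1) * (b - a) with hn
  have hna : a ≤ n := by
    have : a + 1 ≤ (a + 1) * (b - a) := Nat.le_mul_of_pos_right _ (by omega)
    omega
  refine ⟨n, Nat.mul_pos (by omega) (by omega), ?_⟩
  have h4 : f^[n] ∘ f^[n] = f^[n + (a + 1) * (b - a)] := by
    rw [← Function.iterate_add]
  rw [h4, key (a + 1) n hna]

/-- every structure has a core -/
lemma exists_core (A : Str ι ar) [Finite A.carrier] : ∃ S, IsCore A S := by
  have hne : ∃ n, ∃ S : Set A.carrier, IsRetract A S ∧ Nat.card S = n :=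
    ⟨Nat.card (Set.univ : Set A.carrier), Set.univ,
      ⟨id, fun _ _ h => h, fun _ => trivial, fun _ _ => rfl⟩, rfl⟩
  classical
  obtain ⟨S, hS, hcard⟩ := Nat.find_spec hne
  refine ⟨S, hS, fun T hT => ?_⟩
  rw [hcard]
  exact Nat.find_le ⟨T, hT, rfl⟩

/-- every endomorphism of a core has an iterate equal to the identity -/
lemma core_endo_iterate {A : Str ι ar} [Finite A.carrier] {S : Set A.carrier}
    (hS : IsCore A S) {e : S → S} (he : IsHom (induced A S) (induced A S) e) :
    ∃ n, 0 < n ∧ e^[n] = id := by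
  obtain ⟨⟨r, hr, hrS, hrfix⟩, hmin⟩ := hS
  obtain ⟨n, hn, hidem⟩ := exists_iterate_idem e
  set p := e^[n] with hp
  have hphom : IsHom (induced A S) (induced A S) p := isHom_iterate he n
  -- the image of p, as a subset of A, is a retract
  set T : Set A.carrier := Subtype.val '' (Set.range p) with hT
  have hret : IsRetract A T := by
    refine ⟨fun x => ↑(p ⟨r x, hrS x⟩), ?_, ?_, ?_⟩
    · intro i t ht
      have h1 : (induced A S).rel i (fun j => (⟨r (t j), hrS (t j)⟩ : S)) := hr i t ht
      exact hphom i _ h1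
    · intro x; exact ⟨p ⟨r x, hrS x⟩, ⟨_, rfl⟩, rfl⟩
    · rintro x ⟨s, ⟨u, rfl⟩, rfl⟩
      have h2 : (⟨r ↑(p u), hrS _⟩ : S) = p u := Subtype.ext (hrfix _ (p u).2)
      have h3 : p (⟨r ↑(p u), hrS _⟩ : S) = p (p u) := congrArg p h2
      have h4 : p (p u) = p u := congrFun hidem u
      show (↑(p (⟨r ↑(p u), hrS _⟩ : S)) : A.carrier) = ↑(p u)
      rw [h3, h4]
  have hcardT : Nat.card T = (Set.range p).ncard := by
    rw [Nat.card_coe_set_eq, hT, Set.ncard_image_of_injective _ Subtype.coe_injective]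
  have hle : Nat.card S ≤ Nat.card T := hmin T hret
  have hle2 : (Set.range p).ncard ≤ Nat.card S := by
    rw [← Nat.card_coe_set_eq]
    exact Nat.card_le_card_of_injective Subtype.val Subtype.coe_injective
  have hrange : Set.range p = Set.univ := by
    apply Set.eq_of_subset_of_ncard_le (Set.subset_univ _)
    have huniv : (Set.univ : Set S).ncard = Nat.card S := by
      rw [← Nat.card_coe_set_eq]
      exact Nat.card_congr (Equiv.Set.univ _)
    omega
  have hsurj : Function.Surjective p := Set.range_eq_univ.mp hrange
  have hinj : Function.Injective p := Finite.injective_iff_surjective.mpr hsurj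
  exact ⟨n, hn, funext fun x => hinj (congrFun hidem x)⟩

/-- Finite structures are homomorphically equivalent iff they have isomorphic cores. -/
theorem hom_equiv_iff_isomorphic_cores (A B : Str ι ar)
    [Finite A.carrier] [Finite B.carrier] [Nonempty A.carrier] [Nonempty B.carrier] :
    ((∃ h, IsHom A B h) ∧ (∃ h, IsHom B A h)) ↔
      ∃ (S : Set A.carrier) (T : Set B.carrier),
        IsCore A S ∧ IsCore B T ∧ Isomorphic (induced A S) (induced B T) := by
  constructor
  · rintro ⟨⟨f, hf⟩, ⟨g, hg⟩⟩
    obtain ⟨S, hScore⟩ := exists_core A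
    obtain ⟨T, hTcore⟩ := exists_core B
    obtain ⟨rA, hrA, hrAS, hrAfix⟩ := hScore.1
    obtain ⟨rB, hrB, hrBT, hrBfix⟩ := hTcore.1
    set φ : S → T := fun s => ⟨rB (f ↑s), hrBT _⟩ with hφ
    set ψ : T → S := fun t => ⟨rA (g ↑t), hrAS _⟩ with hψ
    have hφhom : IsHom (induced A S) (induced B T) φ := by
      intro i t ht
      exact hrB i _ (hf i _ ht)
    have hψhom : IsHom (induced B T) (induced A S) ψ := by
      intro i t ht
      exact hrA i _ (hg i _ ht)
    have hehom : IsHom (induced A S) (induced A S) (ψ ∘ φ) :=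
      fun i t h => hψhom i _ (hφhom i t h)
    have he'hom : IsHom (induced B T) (induced B T) (φ ∘ ψ) :=
      fun i t h => hφhom i _ (hψhom i t h)
    obtain ⟨n, hn, hne⟩ := core_endo_iterate hScore hehom
    obtain ⟨m, hm, hme⟩ := core_endo_iterate hTcore he'hom
    -- left inverse of φ
    set χ : T → S := (ψ ∘ φ)^[n-1] ∘ ψ with hχ
    have hχhom : IsHom (induced B T) (induced A S) χ :=
      fun i t h => (isHom_iterate hehom (n-1)) i _ (hψhom i t h)
    have hχφ : χ ∘ φ = id := by
      have h1 : (ψ ∘ φ)^[n-1] ∘ (ψ ∘ φ) = (ψ ∘ φ)^[n] := by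
        conv_rhs => rw [show n = (n-1) + 1 by omega]
        exact (Function.iterate_succ _ _).symm
      calc χ ∘ φ = (ψ ∘ φ)^[n-1] ∘ (ψ ∘ φ) := rfl
      _ = (ψ ∘ φ)^[n] := h1
      _ = id := hne
    have hinj : Function.Injective φ := by
      intro a b hab
      have h2 := congrArg χ hab
      rwa [show χ (φ a) = a from congrFun hχφ a, show χ (φ b) = b from congrFun hχφ b] at h2
    have hsurj : Function.Surjective φ := by
      intro t
      refine ⟨ψ ((φ ∘ ψ)^[m-1] t), ?_⟩
      have h1 : (φ ∘ ψ) ∘ (φ ∘ ψ)^[m-1] = (φ ∘ ψ)^[m] := by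
        conv_rhs => rw [show m = (m-1) + 1 by omega]
        exact (Function.iterate_succ' _ _).symm
      calc φ (ψ ((φ ∘ ψ)^[m-1] t)) = ((φ ∘ ψ) ∘ (φ ∘ ψ)^[m-1]) t := rfl
      _ = (φ ∘ ψ)^[m] t := congrFun h1 t
      _ = t := congrFun hme t
    refine ⟨S, T, hScore, hTcore, Equiv.ofBijective φ ⟨hinj, hsurj⟩, fun i t => ?_⟩
    constructor
    · exact fun h => hφhom i t h
    · intro h
      have h3 := hχhom i _ h
      have heq : (χ ∘ (⇑(Equiv.ofBijective φ ⟨hinj, hsurj⟩) ∘ t)) = t :=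
        funext fun j => congrFun hχφ (t j)
      exact cast (congrArg ((induced A S).rel i) heq) h3
  · rintro ⟨S, T, hScore, hTcore, ⟨γ, hγ⟩⟩
    obtain ⟨rA, hrA, hrAS, hrAfix⟩ := hScore.1
    obtain ⟨rB, hrB, hrBT, hrBfix⟩ := hTcore.1
    constructor
    · refine ⟨fun x => (show ↥T from γ ⟨rA x, hrAS x⟩).val, fun i t ht => ?_⟩
      have h1 : (induced A S).rel i (fun j => (⟨rA (t j), hrAS (t j)⟩ : S)) := hrA i t ht
      exact (hγ i _).mp h1
    · refine ⟨fun x => (show ↥S from γ.symm ⟨rB x, hrBT x⟩).val, fun i t ht => ?_⟩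
      have h1 : (induced B T).rel i (fun j => (⟨rB (t j), hrBT (t j)⟩ : T)) := hrB i t ht
      have h2 : (induced A S).rel i (γ.symm ∘ fun j => (⟨rB (t j), hrBT (t j)⟩ : T)) := by
        rw [hγ i]
        have heq : γ ∘ (γ.symm ∘ fun j => (⟨rB (t j), hrBT (t j)⟩ : T)) =
            fun j => (⟨rB (t j), hrBT (t j)⟩ : T) :=
          funext fun j => γ.apply_symm_apply _
        rwa [heq]
      exact h2
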